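/- Coefficient bound for hook-type Schur polynomials at 1: for λ the partition with λ_1 = t−k+1 followed by (k−1−a) ones and then zeros (0 ≤ a ≤ k−1, t ≥ k), the sum of the coefficients of s_λ in k variables satisfies s_λ(1,1,…,1) ≤ binom(t, k−1)·(2k)^{k−1−a}. -/

import Mathlib

/-- The hook-type partition with `λ_1 = t−k+1`, followed by `k−1−a` ones and then zeros. -/
def hookPartition (k t a : ℕ) : Fin k → ℕ :=
  fun j => if (j : ℕ) = 0 then t - k + 1 else if (j : ℕ) ≤ k - 1 - a then 1 else 0

open Filter Finset Topology

lemma slope_lim (m m' : ℕ) :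
    Tendsto (fun q : ℝ => (q ^ m' - q ^ m) / (q - 1)) (𝓝[>] (1:ℝ)) (𝓝 ((m' : ℝ) - m)) := by
  have h1 : HasDerivAt (fun y : ℝ => y ^ m' - y ^ m) ((m' : ℝ) - m) 1 := by
    have h0 := (hasDerivAt_pow m' (1:ℝ)).sub (hasDerivAt_pow m (1:ℝ))
    simp at h0
    exact h0
  have h2 := hasDerivAt_iff_tendsto_slope.mp h1
  have h3 := h2.mono_left (nhdsWithin_mono _ (fun x (hx : x ∈ Set.Ioi 1) => ne_of_gt hx))
  refine h3.congr fun q => ?_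
  simp [slope_def_field]

lemma ratio_lim (m m' n n' : ℕ) (h : n ≠ n') :
    Tendsto (fun q : ℝ => (q ^ m' - q ^ m) / (q ^ n' - q ^ n)) (𝓝[>] (1:ℝ))
      (𝓝 (((m' : ℝ) - m) / ((n' : ℝ) - n))) := by
  have hden : (n' : ℝ) - n ≠ 0 := sub_ne_zero.mpr (by exact_mod_cast h.symm)
  have := (slope_lim m m').div (slope_lim n n') hden
  refine this.congr' ?_
  filter_upwards [eventually_mem_nhdsWithin] with q (hq : q ∈ Set.Ioi 1)
  have hq1 : q - 1 ≠ 0 := sub_ne_zero.mpr (ne_of_gt hq)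
  simp only [Pi.div_apply]
  exact div_div_div_cancel_right₀ hq1 _ _

lemma det_geom (k : ℕ) (q : ℝ) (e : Fin k → ℕ) :
    Matrix.det (Matrix.of fun i j : Fin k => (q ^ (i : ℕ)) ^ (e j)) =
      ∏ j : Fin k, ∏ j' ∈ Finset.Ioi j, (q ^ (e j') - q ^ (e j)) := by
  rw [← Matrix.det_transpose]
  have : Matrix.transpose (Matrix.of fun i j : Fin k => (q ^ (i : ℕ)) ^ (e j)) =
      Matrix.of fun j i : Fin k => (q ^ (e j)) ^ (i : ℕ) := by
    ext j i
    simp [Matrix.transpose_apply, ← pow_mul, mul_comm]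
  rw [this]
  exact Matrix.det_vandermonde (fun j : Fin k => q ^ (e j))

lemma eval_ones_eq (k t a : ℕ) (hk : 0 < k)
    (p : MvPolynomial (Fin k) ℝ) (μf : Fin k → ℕ)
    (hp : ∀ x : Fin k → ℝ,
      MvPolynomial.eval x p *
          Matrix.det (Matrix.of fun i j : Fin k => x i ^ (k - 1 - (j : ℕ))) =
        Matrix.det (Matrix.of fun i j : Fin k => x i ^ (μf j))) :
    MvPolynomial.eval (fun _ => (1 : ℝ)) p =
      ∏ j : Fin k, ∏ j' ∈ Finset.Ioi j,
        (((μf j' : ℝ) - μf j) / ((k - 1 - (j' : ℕ) : ℕ) - ((k - 1 - (j : ℕ) : ℕ) : ℝ))) := by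
  set e0 : Fin k → ℕ := fun j => k - 1 - (j : ℕ) with he0
  have hVne : ∀ q : ℝ, 1 < q →
      (∏ j : Fin k, ∏ j' ∈ Finset.Ioi j, (q ^ (e0 j') - q ^ (e0 j))) ≠ 0 := by
    intro q hq
    rw [Finset.prod_ne_zero_iff]
    intro j _
    rw [Finset.prod_ne_zero_iff]
    intro j' hj'
    have hlt : (j : ℕ) < (j' : ℕ) := Fin.lt_iff_val_lt_val.mp (Finset.mem_Ioi.mp hj')
    have h2 : e0 j' < e0 j := by have := j'.isLt; simp only [he0]; omega
    exact sub_ne_zero.mpr (ne_of_lt (pow_lt_pow_right₀ hq h2))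
  have heq : ∀ᶠ q in 𝓝[>] (1:ℝ),
      MvPolynomial.eval (fun i : Fin k => q ^ (i : ℕ)) p =
        ∏ j : Fin k, ∏ j' ∈ Finset.Ioi j,
          ((q ^ (μf j') - q ^ (μf j)) / (q ^ (e0 j') - q ^ (e0 j))) := by
    filter_upwards [eventually_mem_nhdsWithin] with q (hq : q ∈ Set.Ioi 1)
    have h1 := hp (fun i : Fin k => q ^ (i : ℕ))
    rw [det_geom k q e0, det_geom k q μf] at h1
    rw [Finset.prod_congr rfl (fun j _ => Finset.prod_div_distrib _ _), Finset.prod_div_distrib,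
      eq_div_iff (hVne q hq)]
    exact h1
  have hlim : Filter.Tendsto (fun q : ℝ => ∏ j : Fin k, ∏ j' ∈ Finset.Ioi j,
      ((q ^ (μf j') - q ^ (μf j)) / (q ^ (e0 j') - q ^ (e0 j)))) (𝓝[>] (1:ℝ))
      (𝓝 (∏ j : Fin k, ∏ j' ∈ Finset.Ioi j, (((μf j' : ℝ) - μf j) / ((e0 j' : ℝ) - e0 j)))) := by
    apply tendsto_finset_prod
    intro j _
    apply tendsto_finset_prod
    intro j' hj'
    have hlt : (j : ℕ) < (j' : ℕ) := Fin.lt_iff_val_lt_val.mp (Finset.mem_Ioi.mp hj')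
    have h2 : e0 j ≠ e0 j' := by have := j'.isLt; simp only [he0]; omega
    exact ratio_lim _ _ _ _ h2
  have hcont : Filter.Tendsto (fun q : ℝ => MvPolynomial.eval (fun i : Fin k => q ^ (i : ℕ)) p)
      (𝓝[>] (1:ℝ)) (𝓝 (MvPolynomial.eval (fun _ => (1:ℝ)) p)) := by
    have hc : Continuous fun q : ℝ => MvPolynomial.eval (fun i : Fin k => q ^ (i : ℕ)) p :=
      (MvPolynomial.continuous_eval p).comp (continuous_pi fun i : Fin k => continuous_pow (i : ℕ))
    have h3 : Filter.Tendsto (fun q : ℝ => MvPolynomial.eval (fun i : Fin k => q ^ (i : ℕ)) p)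
        (𝓝[>] (1:ℝ)) (𝓝 (MvPolynomial.eval (fun i : Fin k => (1:ℝ) ^ (i : ℕ)) p)) :=
      (hc.continuousAt (x := (1:ℝ))).tendsto.mono_left nhdsWithin_le_nhds
    simpa using h3
  exact tendsto_nhds_unique hcont (Filter.Tendsto.congr' (Filter.EventuallyEq.symm heq) hlim)

lemma prod_Ioi_fin {k : ℕ} (j : Fin k) (f : ℕ → ℝ) :
    ∏ j' ∈ Finset.Ioi j, f (j' : ℕ) = ∏ i ∈ Finset.Ico ((j : ℕ) + 1) k, f i := by
  refine Finset.prod_nbij' (fun j' => (j' : ℕ)) (fun i => ⟨i % k, Nat.mod_lt _ (Fin.pos j)⟩)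
    ?_ ?_ ?_ ?_ ?_
  · intro x hx
    have := Fin.lt_iff_val_lt_val.mp (Finset.mem_Ioi.mp hx)
    simp only [Finset.mem_Ico]
    exact ⟨by omega, x.isLt⟩
  · intro i hi
    simp only [Finset.mem_Ico] at hi
    simp only [Finset.mem_Ioi, Fin.lt_iff_val_lt_val]
    simpa [Nat.mod_eq_of_lt hi.2] using hi.1
  · intro x hx; ext; simp [Nat.mod_eq_of_lt x.isLt]
  · intro i hi; simp only [Finset.mem_Ico] at hi; simp [Nat.mod_eq_of_lt hi.2]
  · intro x hx; rfl

lemma telescope (H : ℕ → ℝ) (hH : ∀ i, 0 < H i) (m n : ℕ) (h : m ≤ n) :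
    ∏ i ∈ Finset.Ico m n, (H (i + 1) / H i) = H n / H m := by
  induction n, h using Nat.le_induction with
  | base => simp [div_self (hH m).ne']
  | succ n hn ih =>
    rw [Finset.prod_Ico_succ_top (by omega), ih]
    have h1 := (hH n).ne'
    have h2 := (hH m).ne'
    field_simp

lemma choose_prod (t m : ℕ) (h : m ≤ t) :
    ∏ i ∈ Finset.range m, (((t : ℝ) - ((m - 1 - i : ℕ) : ℝ)) / ((i : ℝ) + 1)) =
      (Nat.choose t m : ℝ) := by
  rw [Finset.prod_div_distrib]
  have h1 : ∏ i ∈ Finset.range m, ((t : ℝ) - ((m - 1 - i : ℕ) : ℝ)) =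
      (t.descFactorial m : ℝ) := by
    rw [Finset.prod_range_reflect (fun i => (t : ℝ) - (i : ℕ)) m,
      Nat.descFactorial_eq_prod_range, Nat.cast_prod]
    refine Finset.prod_congr rfl fun i hi => ?_
    have hi' : i < m := Finset.mem_range.mp hi
    rw [Nat.cast_sub (by omega)]
  have h2 : ∏ i ∈ Finset.range m, ((i : ℝ) + 1) = (m.factorial : ℝ) := by
    rw [← Finset.prod_range_add_one_eq_factorial, Nat.cast_prod]
    exact Finset.prod_congr rfl fun i _ => by push_cast; ring
  rw [h1, h2, Nat.descFactorial_eq_factorial_mul_choose, Nat.cast_mul, mul_comm,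
    mul_div_assoc, div_self (by exact_mod_cast m.factorial_ne_zero), mul_one]

/-- Coefficient bound for hook-type Schur polynomials at the all-ones point:
`s_λ(1,…,1) ≤ binom(t, k−1)·(2k)^{k−1−a}` for `λ = hookPartition k t a`, `0 ≤ a ≤ k−1`,
`t ≥ k`.  Here `s_λ` is any polynomial `p` satisfying the bialternant identity
`p(x) · det([x_i^{k−j}]) = det([x_i^{λ_j+k−j}])` for all `x ∈ ℝ^k` (this determines `p`
uniquely, since the Vandermonde determinant vanishes only on a nowhere-dense set);
since the coefficients of `s_λ` are non-negative, its value at `(1,…,1)` is the sum of the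
absolute values of its coefficients. -/
theorem hook_schur_ones_bound (k t a : ℕ) (hk : 0 < k) (ha : a ≤ k - 1) (ht : k ≤ t)
    (p : MvPolynomial (Fin k) ℝ)
    (hp : ∀ x : Fin k → ℝ,
      MvPolynomial.eval x p *
          Matrix.det (Matrix.of fun i j : Fin k => x i ^ (k - 1 - (j : ℕ))) =
        Matrix.det (Matrix.of fun i j : Fin k =>
          x i ^ (hookPartition k t a j + (k - 1 - (j : ℕ))))) :
    MvPolynomial.eval (fun _ => (1 : ℝ)) p ≤
      (Nat.choose t (k - 1) : ℝ) * (2 * k : ℝ) ^ (k - 1 - a) := by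
  set b := k - 1 - a with hb
  set μf : Fin k → ℕ := fun j => hookPartition k t a j + (k - 1 - (j : ℕ)) with hμf
  have hμval : ∀ j : Fin k, μf j = if (j : ℕ) = 0 then t
      else if (j : ℕ) ≤ b then k - (j : ℕ) else k - 1 - (j : ℕ) := by
    intro j
    have := j.isLt
    simp only [hμf, hookPartition, hb]
    split_ifs <;> omega
  have hL := eval_ones_eq k t a hk p μf hp
  rw [hL]
  -- rewrite each factor in the nicer orientation
  have hfac : ∀ j : Fin k, ∀ j' ∈ Finset.Ioi j,
      (((μf j' : ℝ) - μf j) / ((k - 1 - (j' : ℕ) : ℕ) - ((k - 1 - (j : ℕ) : ℕ) : ℝ))) =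
        ((μf j : ℝ) - μf j') / ((j' : ℕ) - ((j : ℕ) : ℝ)) := by
    intro j j' hj'
    have h1 : (j : ℕ) < (j' : ℕ) := Fin.lt_iff_val_lt_val.mp (Finset.mem_Ioi.mp hj')
    have h2 := j'.isLt
    have e1 : ((k - 1 - (j' : ℕ) : ℕ) : ℝ) = (k : ℝ) - 1 - (j' : ℕ) := by
      have : (j' : ℕ) ≤ k - 1 := by omega
      push_cast [Nat.cast_sub this, Nat.cast_sub (by omega : 1 ≤ k)]
      ring
    have e2 : ((k - 1 - (j : ℕ) : ℕ) : ℝ) = (k : ℝ) - 1 - (j : ℕ) := by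
      have : (j : ℕ) ≤ k - 1 := by omega
      push_cast [Nat.cast_sub this, Nat.cast_sub (by omega : 1 ≤ k)]
      ring
    rw [e1, e2]
    rw [show (k:ℝ) - 1 - (j':ℕ) - ((k:ℝ) - 1 - (j:ℕ)) = -(((j':ℕ):ℝ) - (j:ℕ)) by ring,
      ← neg_sub ((μf j : ℝ)) ((μf j' : ℝ)), neg_div_neg_eq]
  rw [Finset.prod_congr rfl (fun j _ => Finset.prod_congr rfl (hfac j))]
  -- strict antitonicity and nonnegativity of factors
  have hμlt : ∀ j j' : Fin k, (j : ℕ) < (j' : ℕ) → μf j' < μf j := by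
    intro j j' h
    have := j'.isLt
    rw [hμval j, hμval j']
    split_ifs <;> omega
  have hg0 : ∀ j : Fin k, ∀ j' ∈ Finset.Ioi j,
      (0 : ℝ) ≤ ((μf j : ℝ) - μf j') / ((j' : ℕ) - ((j : ℕ) : ℝ)) := by
    intro j j' hj'
    have h1 : (j : ℕ) < (j' : ℕ) := Fin.lt_iff_val_lt_val.mp (Finset.mem_Ioi.mp hj')
    have h2 := hμlt j j' h1
    apply div_nonneg <;> simp [sub_nonneg] <;> [exact_mod_cast h2.le; exact_mod_cast h1.le]
  -- the per-row bound
  set U : ℕ → ℝ := fun i => if i = 0 then (Nat.choose t (k - 1) : ℝ)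
      else if i ≤ b then 2 * k else 1 with hU
  have hrow : ∀ j : Fin k,
      (∏ j' ∈ Finset.Ioi j, ((μf j : ℝ) - μf j') / ((j' : ℕ) - ((j : ℕ) : ℝ))) ≤ U (j : ℕ) := by
    intro j
    have hjk := j.isLt
    rcases Nat.eq_zero_or_pos (j : ℕ) with hj0 | hj1
    · -- row 0
      have hUj : U (j : ℕ) = (Nat.choose t (k - 1) : ℝ) := by simp [hU, hj0]
      rw [hUj]
      have hμj : (μf j : ℝ) = t := by rw [hμval]; simp [hj0]
      have step1 : (∏ j' ∈ Finset.Ioi j, ((μf j : ℝ) - μf j') / ((j' : ℕ) - ((j : ℕ) : ℝ))) ≤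
          ∏ j' ∈ Finset.Ioi j, (((t : ℝ) - ((k - 1 - (j' : ℕ) : ℕ) : ℝ)) / ((j' : ℕ) : ℝ)) := by
        refine Finset.prod_le_prod (hg0 j) ?_
        intro j' hj'
        have h1 : (j : ℕ) < (j' : ℕ) := Fin.lt_iff_val_lt_val.mp (Finset.mem_Ioi.mp hj')
        have h2 := j'.isLt
        have hμj' : k - 1 - (j' : ℕ) ≤ μf j' := by rw [hμval j']; split_ifs <;> omega
        rw [hμj, hj0, Nat.cast_zero, sub_zero]
        have hd : (0:ℝ) < ((j' : ℕ) : ℝ) := by exact_mod_cast (by omega : 0 < (j' : ℕ))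
        rw [div_le_div_iff_of_pos_right hd]
        exact sub_le_sub_left (by exact_mod_cast hμj') _
      refine le_trans step1 (le_of_eq ?_)
      rw [prod_Ioi_fin j (fun i => ((t : ℝ) - ((k - 1 - i : ℕ) : ℝ)) / (i : ℝ)), hj0,
        Finset.prod_Ico_eq_prod_range]
      simp only [Nat.zero_add]
      have hcg : ∀ i ∈ Finset.range (k - 1),
          ((t : ℝ) - ((k - 1 - (1 + i) : ℕ) : ℝ)) / ((1 + i : ℕ) : ℝ) =
            ((t : ℝ) - (((k - 1) - 1 - i : ℕ) : ℝ)) / ((i : ℝ) + 1) := by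
        intro i _
        have e1 : k - 1 - (1 + i) = (k - 1) - 1 - i := by omega
        rw [e1]
        push_cast
        ring_nf
      rw [Finset.prod_congr rfl hcg]
      exact choose_prod t (k - 1) (by omega)
    · by_cases hjb : (j : ℕ) ≤ b
      · -- middle rows
        have hUj : U (j : ℕ) = 2 * k := by
          rw [hU]; simp only; rw [if_neg (by omega), if_pos hjb]
        set HR : ℕ → ℝ := fun x => ((max (x - (j : ℕ)) (b + 1 - (j : ℕ)) : ℕ) : ℝ) with hHR
        have hHRpos : ∀ x, 0 < HR x := by
          intro x
          have : 0 < max (x - (j : ℕ)) (b + 1 - (j : ℕ)) := by omega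
          simp only [hHR]
          exact_mod_cast this
        have heq1 : ∀ j' ∈ Finset.Ioi j, ((μf j : ℝ) - μf j') / ((j' : ℕ) - ((j : ℕ) : ℝ)) =
            HR ((j' : ℕ) + 1) / HR (j' : ℕ) := by
          intro j' hj'
          have h1 : (j : ℕ) < (j' : ℕ) := Fin.lt_iff_val_lt_val.mp (Finset.mem_Ioi.mp hj')
          have h2 := j'.isLt
          have hμj : μf j = k - (j : ℕ) := by
            rw [hμval]; rw [if_neg (by omega), if_pos hjb]
          have hdne : ((j' : ℕ) : ℝ) - ((j : ℕ) : ℝ) ≠ 0 := by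
            have : ((j : ℕ) : ℝ) < ((j' : ℕ) : ℝ) := by exact_mod_cast h1
            linarith
          by_cases hb' : (j' : ℕ) ≤ b
          · have hμj' : μf j' = k - (j' : ℕ) := by
              rw [hμval]; rw [if_neg (by omega), if_pos hb']
            have hA : HR ((j' : ℕ) + 1) = ((b + 1 - (j : ℕ) : ℕ) : ℝ) := by
              simp only [hHR]; congr 1; omega
            have hB : HR ((j' : ℕ) : ℕ) = ((b + 1 - (j : ℕ) : ℕ) : ℝ) := by
              simp only [hHR]; congr 1; omega
            have hne : ((b + 1 - (j : ℕ) : ℕ) : ℝ) ≠ 0 := by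
              have : 0 < b + 1 - (j : ℕ) := by omega
              exact_mod_cast this.ne'
            have c1 : ((k - (j : ℕ) : ℕ) : ℝ) = (k : ℝ) - (j : ℕ) :=
              Nat.cast_sub (by omega)
            have c2 : ((k - (j' : ℕ) : ℕ) : ℝ) = (k : ℝ) - (j' : ℕ) :=
              Nat.cast_sub (by omega)
            rw [hμj, hμj', hA, hB, div_self hne, c1, c2, div_eq_one_iff_eq hdne]
            ring
          · have hμj' : μf j' = k - 1 - (j' : ℕ) := by
              rw [hμval]; rw [if_neg (by omega), if_neg hb']
            have hA : HR ((j' : ℕ) + 1) = (((j' : ℕ) + 1 - (j : ℕ) : ℕ) : ℝ) := by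
              simp only [hHR]; congr 1; omega
            have hB : HR ((j' : ℕ) : ℕ) = (((j' : ℕ) - (j : ℕ) : ℕ) : ℝ) := by
              simp only [hHR]; congr 1; omega
            have c1 : ((k - (j : ℕ) : ℕ) : ℝ) = (k : ℝ) - (j : ℕ) :=
              Nat.cast_sub (by omega)
            have c2 : ((k - 1 - (j' : ℕ) : ℕ) : ℝ) = (k : ℝ) - 1 - (j' : ℕ) := by
              rw [Nat.cast_sub (show (j' : ℕ) ≤ k - 1 by omega),
                Nat.cast_sub (show 1 ≤ k by omega)]
              norm_num
            have c3 : (((j' : ℕ) + 1 - (j : ℕ) : ℕ) : ℝ) = ((j' : ℕ) : ℝ) + 1 - (j : ℕ) := by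
              rw [Nat.cast_sub (by omega)]
              push_cast
              ring
            have c4 : (((j' : ℕ) - (j : ℕ) : ℕ) : ℝ) = ((j' : ℕ) : ℝ) - (j : ℕ) :=
              Nat.cast_sub (by omega)
            rw [hμj, hμj', hA, hB, c1, c2, c3, c4, div_eq_div_iff hdne hdne]
            ring
        rw [Finset.prod_congr rfl heq1, prod_Ioi_fin j (fun i => HR (i + 1) / HR i),
          telescope HR hHRpos _ _ (by omega)]
        have hA : HR k = ((k - (j : ℕ) : ℕ) : ℝ) := by simp only [hHR]; congr 1; omega
        have hB : HR ((j : ℕ) + 1) = ((b + 1 - (j : ℕ) : ℕ) : ℝ) := by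
          simp only [hHR]; congr 1; omega
        rw [hUj, hA, hB]
        have h1 : ((k - (j : ℕ) : ℕ) : ℝ) / ((b + 1 - (j : ℕ) : ℕ) : ℝ) ≤
            ((k - (j : ℕ) : ℕ) : ℝ) :=
          div_le_self (by positivity) (by exact_mod_cast (by omega : 1 ≤ b + 1 - (j : ℕ)))
        refine le_trans h1 ?_
        have : (k - (j : ℕ) : ℕ) ≤ 2 * k := by omega
        exact_mod_cast this
      · -- bottom rows
        have hUj : U (j : ℕ) = 1 := by
          rw [hU]; simp only; rw [if_neg (by omega), if_neg hjb]
        rw [hUj]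
        have heq1 : ∀ j' ∈ Finset.Ioi j,
            ((μf j : ℝ) - μf j') / ((j' : ℕ) - ((j : ℕ) : ℝ)) = 1 := by
          intro j' hj'
          have h1 : (j : ℕ) < (j' : ℕ) := Fin.lt_iff_val_lt_val.mp (Finset.mem_Ioi.mp hj')
          have h2 := j'.isLt
          have hdne : ((j' : ℕ) : ℝ) - ((j : ℕ) : ℝ) ≠ 0 := by
            have : ((j : ℕ) : ℝ) < ((j' : ℕ) : ℝ) := by exact_mod_cast h1
            linarith
          have hμj : μf j = k - 1 - (j : ℕ) := by
            rw [hμval]; rw [if_neg (by omega), if_neg hjb]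
          have hμj' : μf j' = k - 1 - (j' : ℕ) := by
            rw [hμval]; rw [if_neg (by omega), if_neg (by omega)]
          have c1 : ((k - 1 - (j : ℕ) : ℕ) : ℝ) = (k : ℝ) - 1 - (j : ℕ) := by
            rw [Nat.cast_sub (show (j : ℕ) ≤ k - 1 by omega),
              Nat.cast_sub (show 1 ≤ k by omega)]
            norm_num
          have c2 : ((k - 1 - (j' : ℕ) : ℕ) : ℝ) = (k : ℝ) - 1 - (j' : ℕ) := by
            rw [Nat.cast_sub (show (j' : ℕ) ≤ k - 1 by omega),
              Nat.cast_sub (show 1 ≤ k by omega)]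
            norm_num
          rw [hμj, hμj', c1, c2, div_eq_one_iff_eq hdne]
          ring
        rw [Finset.prod_congr rfl heq1, Finset.prod_const_one]
  have hprod_le : (∏ j : Fin k, ∏ j' ∈ Finset.Ioi j,
      ((μf j : ℝ) - μf j') / ((j' : ℕ) - ((j : ℕ) : ℝ))) ≤ ∏ j : Fin k, U (j : ℕ) :=
    Finset.prod_le_prod (fun j _ => Finset.prod_nonneg (hg0 j)) (fun j _ => hrow j)
  have hUprod : (∏ j : Fin k, U (j : ℕ)) =
      (Nat.choose t (k - 1) : ℝ) * (2 * k : ℝ) ^ b := by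
    rw [Fin.prod_univ_eq_prod_range (fun i => U i) k]
    have hsplit : ∀ i ∈ Finset.range k, U i =
        (if i = 0 then (Nat.choose t (k - 1) : ℝ) else 1) *
          (if i ∈ Finset.Icc 1 b then (2 * k : ℝ) else 1) := by
      intro i _
      simp only [hU, Finset.mem_Icc]
      split_ifs
      all_goals try ring
      all_goals exfalso; omega
    rw [Finset.prod_congr rfl hsplit, Finset.prod_mul_distrib]
    have h1 : (∏ i ∈ Finset.range k, if i = 0 then (Nat.choose t (k - 1) : ℝ) else 1) =
        (Nat.choose t (k - 1) : ℝ) := by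
      rw [Finset.prod_ite_eq' (Finset.range k) 0 (fun _ => (Nat.choose t (k - 1) : ℝ))]
      simp [Finset.mem_range, hk]
    have h2 : (∏ i ∈ Finset.range k, if i ∈ Finset.Icc 1 b then (2 * k : ℝ) else 1) =
        (2 * k : ℝ) ^ b := by
      rw [Finset.prod_ite_mem,
        show Finset.range k ∩ Finset.Icc 1 b = Finset.Icc 1 b by
          ext i; simp only [Finset.mem_inter, Finset.mem_Icc, Finset.mem_range]; omega,
        Finset.prod_const, Nat.card_Icc]
      simp
    rw [h1, h2]
  calc _ ≤ ∏ j : Fin k, U (j : ℕ) := hprod_le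
    _ = _ := by rw [hUprod]
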